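/- arXiv:2403.03197 — 2 statements merged into one kernel-verified Lean document; each statement's English description precedes it below -/
import Mathlib

section
/- Let n, h, k ≥ 1 be integers, d = (0,−1,1) and e = (1,0,0). Let {(r^(i,j), t^(i,j), ℓ^(i,j), b^(i,j))}_{1≤i≤h, 1≤j≤k} be a family of tiles in 𝒞_n forming a valid tiling of an h × k rectangle (r^(i,j) = ℓ^(i+1,j) for 1 ≤ i ≤ h−1 and t^(i,j) = b^(i,j+1) for 1 ≤ j ≤ k−1), with averages R = (1/k)·Σ_j r^(h,j), T = (1/h)·Σ_i t^(i,k), L = (1/k)·Σ_j ℓ^(1,j), B = (1/h)·Σ_i b^(i,1) in ℚ³. If the tiling is cylindrical, i.e., L = R, then ⟨(1/n)d, T⟩ ≡ ⟨(1/n)d, B⟩ − k·⟨e, B⟩ (mod 1), that is, ⟨(1/n)d, T⟩ − ⟨(1/n)d, B⟩ + k·⟨e, B⟩ is an integer. -/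
open scoped BigOperators

namespace MetallicMean

/-- A 3-dimensional integer vector. -/
abbrev Vec3 := ℤ × ℤ × ℤ

/-- A Wang tile is a quadruple (right, top, left, bottom) of labels. -/
abbrev Tile := Vec3 × Vec3 × Vec3 × Vec3

def right (τ : Tile) : Vec3 := τ.1
def top (τ : Tile) : Vec3 := τ.2.1
def left (τ : Tile) : Vec3 := τ.2.2.1
def bottom (τ : Tile) : Vec3 := τ.2.2.2

/-- Reflection of a tile by the positive diagonal: (r,t,ℓ,b) ↦ (t,r,b,ℓ). -/
def reflect (τ : Tile) : Tile := (top τ, right τ, bottom τ, left τ)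

/-- The set V_n of admissible labels. -/
def Vset (n : ℤ) : Set Vec3 :=
  {v | 0 ≤ v.1 ∧ v.1 ≤ v.2.1 ∧ v.2.1 ≤ v.2.2 ∧ v.2.2 ≤ n + 1 ∧ v.2.1 ≤ 1}

/-- The function θ_n. -/
def theta (n : ℤ) (u v : Vec3) : Vec3 :=
  (u.1,
   if u.1 = 0 then v.2.2 - n else 1,
   if v.1 = 0 then v.2.1 + u.1 else u.2.2 + 1)

/-- The set 𝒞_n of instances of the θ_n-chip. -/
def Cset (n : ℤ) : Set Tile :=
  {τ | ∃ u v : Vec3, u ∈ Vset n ∧ v ∈ Vset n ∧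
      theta n u v ∈ Vset n ∧ theta n v u ∈ Vset n ∧
      τ = (theta n u v, theta n v u, u, v)}

/-- The n-th metallic mean β, the positive root of x² - nx - 1. -/
noncomputable def beta (n : ℤ) : ℝ := ((n : ℝ) + Real.sqrt ((n : ℝ) ^ 2 + 4)) / 2

/-- The conjugate root β* = n - β = -β⁻¹. -/
noncomputable def betaStar (n : ℤ) : ℝ := (n : ℝ) - beta n

/-- The coding map Λ_n. -/
noncomputable def Lam (n : ℤ) (x y : ℝ) : Vec3 :=
  (⌊y + betaStar n + 1⌋,
   ⌊(beta n)⁻¹ * x + y + betaStar n + 1⌋,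
   ⌊beta n * x + y + betaStar n + 1⌋)

/-- The Wang tile TILE_n(x, y), written as (right, top, left, bottom). -/
noncomputable def TileAt (n : ℤ) (x y : ℝ) : Tile :=
  (Lam n (Int.fract x) (Int.fract y),
   Lam n (Int.fract y) (Int.fract x),
   Lam n (Int.fract (x + betaStar n)) (Int.fract y),
   Lam n (Int.fract (y + betaStar n)) (Int.fract x))

/-- The metallic mean Wang tile set 𝒯_n = {TILE_n(x,y) : (x,y) ∈ [0,1]²}. -/
def Tset (n : ℤ) : Set Tile :=
  {τ | ∃ x y : ℝ, x ∈ Set.Icc (0 : ℝ) 1 ∧ y ∈ Set.Icc (0 : ℝ) 1 ∧ τ = TileAt n x y}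

/-- A configuration assigns a tile to every position of ℤ². -/
abbrev Config := ℤ × ℤ → Tile

/-- A configuration is valid w.r.t. a set `S` of Wang tiles if all its tiles are in `S`
and contiguous edges of adjacent tiles match. -/
def IsValid (S : Set Tile) (w : Config) : Prop :=
  (∀ p : ℤ × ℤ, w p ∈ S) ∧
  ∀ p : ℤ × ℤ,
    right (w p) = left (w (p + (1, 0))) ∧
    top (w p) = bottom (w (p + (0, 1)))

/-- The Wang shift Ω_S of all valid configurations over `S`. -/
def OmegaOf (S : Set Tile) : Set Config := {w | IsValid S w}

/-- The shift ℤ²-action on configurations: (σ^k w)(p) = w(p + k). -/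
def shift (k : ℤ × ℤ) (w : Config) : Config := fun p => w (p + k)

end MetallicMean

namespace MetallicMean

/-- Rational 3-dimensional vectors. -/
abbrev Vec3Q := ℚ × ℚ × ℚ

/-- Cast an integer vector to a rational vector. -/
def toQ (v : Vec3) : Vec3Q := ((v.1 : ℚ), (v.2.1 : ℚ), (v.2.2 : ℚ))

/-- The canonical inner product on ℚ³. -/
def dotQ (a b : Vec3Q) : ℚ := a.1 * b.1 + a.2.1 * b.2.1 + a.2.2 * b.2.2

/-- The vector d = (0, -1, 1). -/
def dQ : Vec3Q := (0, -1, 1)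

/-- The vector e = (1, 0, 0). -/
def eQ : Vec3Q := (1, 0, 0)

end MetallicMean

namespace MetallicMean

private lemma dotQ_smul (a : Vec3Q) (c : ℚ) (b : Vec3Q) : dotQ a (c • b) = c * dotQ a b := by
  simp [dotQ, Prod.smul_def, smul_eq_mul]; ring

private lemma dotQ_sum (a : Vec3Q) (s : Finset ℤ) (f : ℤ → Vec3Q) :
    dotQ a (∑ j ∈ s, f j) = ∑ j ∈ s, dotQ a (f j) := by
  simp [dotQ, Prod.fst_sum, Prod.snd_sum, Finset.mul_sum, Finset.sum_add_distrib]

private lemma dotQ_d (n : ℤ) (w : Vec3) :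
    dotQ ((1 / (n : ℚ)) • dQ) (toQ w) = ((w.2.2 : ℚ) - w.2.1) / n := by
  simp [dotQ, dQ, toQ, Prod.smul_def, smul_eq_mul]; ring

private lemma dotQ_e (w : Vec3) : dotQ eQ (toQ w) = (w.1 : ℚ) := by
  simp [dotQ, eQ, toQ]

private lemma tile_fst {n : ℤ} {τ : Tile} (hτ : τ ∈ Cset n) :
    (right τ).1 = (left τ).1 ∧ (top τ).1 = (bottom τ).1 := by
  obtain ⟨u, v, _, _, _, _, rfl⟩ := hτ
  simp [right, top, left, bottom, theta]

private lemma tile_key {n : ℤ} (hn : 1 ≤ n) {τ : Tile} (hτ : τ ∈ Cset n) :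
    ((top τ).2.2 - (top τ).2.1 : ℚ) / n - ((bottom τ).2.2 - (bottom τ).2.1) / n
      + (bottom τ).1
    = ((right τ).2.2 - (right τ).2.1) / n - ((left τ).2.2 - (left τ).2.1) / n
      + (left τ).1 := by
  obtain ⟨u, v, hu, hv, _, _, rfl⟩ := hτ
  obtain ⟨hu0, hu1, hu2, hu3, hu4⟩ := hu
  obtain ⟨hv0, hv1, hv2, hv3, hv4⟩ := hv
  have hn' : (n : ℚ) ≠ 0 := by exact_mod_cast (by omega : n ≠ 0)
  simp only [right, top, left, bottom, theta]
  have hu01 : u.1 = 0 ∨ (u.1 = 1 ∧ u.2.1 = 1) := by omega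
  have hv01 : v.1 = 0 ∨ (v.1 = 1 ∧ v.2.1 = 1) := by omega
  rcases hu01 with h1 | ⟨h1, h1'⟩ <;> rcases hv01 with h2 | ⟨h2, h2'⟩ <;>
    simp only [h1, h2, if_true, if_pos, one_ne_zero, if_false, if_neg] <;>
    push_cast <;> field_simp <;> first
      | ring1
      | omega
      | (have hq : ((v.2.1 : ℚ)) = 1 := by exact_mod_cast h2'
         linear_combination hq)
      | (have hq : ((u.2.1 : ℚ)) = 1 := by exact_mod_cast h1'
         linear_combination -hq)
      | (have hq : ((v.2.1 : ℚ)) = 1 := by exact_mod_cast h2'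
         have hq' : ((u.2.1 : ℚ)) = 1 := by exact_mod_cast h1'
         linear_combination hq - hq')


private def phi (n : ℤ) (w : Vec3) : ℚ := ((w.2.2 : ℚ) - w.2.1) / n

private lemma dotQ_phi (n : ℤ) (w : Vec3) :
    dotQ ((1 / (n : ℚ)) • dQ) (toQ w) = phi n w := dotQ_d n w

private lemma tile_key' {n : ℤ} (hn : 1 ≤ n) {τ : Tile} (hτ : τ ∈ Cset n) :
    phi n (top τ) - phi n (bottom τ) + ((bottom τ).1 : ℚ)
      = phi n (right τ) - phi n (left τ) + ((left τ).1 : ℚ) := by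
  have := tile_key hn hτ
  simp only [phi]
  push_cast
  linear_combination this

private lemma Icc_insert {m : ℤ} (hm : 1 ≤ m) :
    Finset.Icc (1 : ℤ) (m + 1) = insert (m + 1) (Finset.Icc 1 m) := by
  ext x; simp only [Finset.mem_Icc, Finset.mem_insert]; omega

private lemma not_mem_Icc (m : ℤ) : m + 1 ∉ Finset.Icc (1 : ℤ) m := by
  simp only [Finset.mem_Icc]; omega

/-- For a valid cylindrical h × k rectangular tiling (L = R) by tiles of 𝒞_n,
the averages of the top and bottom labels satisfy
⟨(1/n)d, T⟩ ≡ ⟨(1/n)d, B⟩ - k·⟨e, B⟩ (mod 1). -/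
theorem statement6 (n h k : ℤ) (hn : 1 ≤ n) (hh : 1 ≤ h) (hk : 1 ≤ k)
    (tile : ℤ → ℤ → Tile)
    (htile : ∀ i j : ℤ, 1 ≤ i → i ≤ h → 1 ≤ j → j ≤ k → tile i j ∈ Cset n)
    (hhoriz : ∀ i j : ℤ, 1 ≤ i → i ≤ h - 1 → 1 ≤ j → j ≤ k →
      right (tile i j) = left (tile (i + 1) j))
    (hvert : ∀ i j : ℤ, 1 ≤ i → i ≤ h → 1 ≤ j → j ≤ k - 1 →
      top (tile i j) = bottom (tile i (j + 1)))
    (hcyl : (1 / (k : ℚ)) • ∑ j ∈ Finset.Icc 1 k, toQ (left (tile 1 j)) =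
      (1 / (k : ℚ)) • ∑ j ∈ Finset.Icc 1 k, toQ (right (tile h j))) :
    ∃ m : ℤ,
      dotQ ((1 / (n : ℚ)) • dQ) ((1 / (h : ℚ)) • ∑ i ∈ Finset.Icc 1 h, toQ (top (tile i k))) -
        dotQ ((1 / (n : ℚ)) • dQ) ((1 / (h : ℚ)) • ∑ i ∈ Finset.Icc 1 h, toQ (bottom (tile i 1))) +
        (k : ℚ) * dotQ eQ ((1 / (h : ℚ)) • ∑ i ∈ Finset.Icc 1 h, toQ (bottom (tile i 1))) =
      (m : ℚ) := by
  classical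
  have hh' : (h : ℚ) ≠ 0 := by exact_mod_cast (by omega : h ≠ 0)
  have hk' : (k : ℚ) ≠ 0 := by exact_mod_cast (by omega : k ≠ 0)
  -- bottom first coordinate constant along a column
  have hB : ∀ i : ℤ, 1 ≤ i → i ≤ h → ∀ m : ℤ, 1 ≤ m → m ≤ k →
      (bottom (tile i m)).1 = (bottom (tile i 1)).1 := by
    intro i hi1 hi2
    refine Int.le_induction ?_ ?_
    · intro _; rfl
    · intro m hm ih hmk
      rw [← hvert i m hi1 hi2 hm (by omega),
        (tile_fst (htile i m hi1 hi2 hm (by omega))).2]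
      exact ih (by omega)
  -- left first coordinate constant along a row
  have hL : ∀ j : ℤ, 1 ≤ j → j ≤ k → ∀ m : ℤ, 1 ≤ m → m ≤ h →
      (left (tile m j)).1 = (left (tile 1 j)).1 := by
    intro j hj1 hj2
    refine Int.le_induction ?_ ?_
    · intro _; rfl
    · intro m hm ih hmh
      rw [← hhoriz m j hm (by omega) hj1 hj2,
        (tile_fst (htile m j hm (by omega) hj1 hj2)).1]
      exact ih (by omega)
  -- vertical telescoping
  have hT : ∀ i : ℤ, 1 ≤ i → i ≤ h → ∀ m : ℤ, 1 ≤ m → m ≤ k →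
      phi n (top (tile i m)) - phi n (bottom (tile i 1)) =
        ∑ j ∈ Finset.Icc 1 m, (phi n (top (tile i j)) - phi n (bottom (tile i j))) := by
    intro i hi1 hi2
    refine Int.le_induction ?_ ?_
    · intro _; simp
    · intro m hm ih hmk
      rw [Icc_insert hm, Finset.sum_insert (not_mem_Icc m), ← ih (by omega),
        ← hvert i m hi1 hi2 hm (by omega)]
      ring
  -- horizontal telescoping
  have hH : ∀ j : ℤ, 1 ≤ j → j ≤ k → ∀ m : ℤ, 1 ≤ m → m ≤ h →
      ∑ i ∈ Finset.Icc 1 m, (phi n (right (tile i j)) - phi n (left (tile i j))) =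
        phi n (right (tile m j)) - phi n (left (tile 1 j)) := by
    intro j hj1 hj2
    refine Int.le_induction ?_ ?_
    · intro _; simp
    · intro m hm ih hmh
      rw [Icc_insert hm, Finset.sum_insert (not_mem_Icc m), ih (by omega),
        ← hhoriz m j hm (by omega) hj1 hj2]
      ring
  -- cardinality facts
  have hcardk : ((Finset.Icc (1 : ℤ) k).card : ℚ) = (k : ℚ) := by
    rw [Int.card_Icc]
    have : ((k + 1 - 1).toNat : ℤ) = k := by omega
    exact_mod_cast this
  have hcardh : ((Finset.Icc (1 : ℤ) h).card : ℚ) = (h : ℚ) := by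
    rw [Int.card_Icc]
    have : ((h + 1 - 1).toNat : ℤ) = h := by omega
    exact_mod_cast this
  -- cylindricity in scalar form
  have hcyl' : ∑ j ∈ Finset.Icc 1 k, phi n (left (tile 1 j)) =
      ∑ j ∈ Finset.Icc 1 k, phi n (right (tile h j)) := by
    have hc := congrArg (dotQ ((1 / (n : ℚ)) • dQ)) hcyl
    simp only [dotQ_smul, dotQ_sum, dotQ_phi] at hc
    exact mul_left_cancel₀ (by simp [hk'] : (1 / (k:ℚ)) ≠ 0) hc
  -- main identity
  have key1 : ∑ i ∈ Finset.Icc 1 h, phi n (top (tile i k)) -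
      ∑ i ∈ Finset.Icc 1 h, phi n (bottom (tile i 1)) +
      (k : ℚ) * ∑ i ∈ Finset.Icc 1 h, ((bottom (tile i 1)).1 : ℚ) =
      (h : ℚ) * ∑ j ∈ Finset.Icc 1 k, ((left (tile 1 j)).1 : ℚ) := by
    have e1 : ∑ i ∈ Finset.Icc 1 h, phi n (top (tile i k)) -
        ∑ i ∈ Finset.Icc 1 h, phi n (bottom (tile i 1)) +
        (k : ℚ) * ∑ i ∈ Finset.Icc 1 h, ((bottom (tile i 1)).1 : ℚ) =
        ∑ i ∈ Finset.Icc 1 h, ∑ j ∈ Finset.Icc 1 k,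
          (phi n (top (tile i j)) - phi n (bottom (tile i j)) + ((bottom (tile i j)).1 : ℚ)) := by
      rw [← Finset.sum_sub_distrib, Finset.mul_sum, ← Finset.sum_add_distrib]
      refine Finset.sum_congr rfl fun i hi => ?_
      rw [Finset.mem_Icc] at hi
      rw [hT i hi.1 hi.2 k hk le_rfl, Finset.sum_add_distrib]
      congr 1
      have : ∀ j ∈ Finset.Icc (1:ℤ) k, ((bottom (tile i j)).1 : ℚ) =
          ((bottom (tile i 1)).1 : ℚ) := by
        intro j hj
        rw [Finset.mem_Icc] at hj
        exact_mod_cast congrArg (fun z : ℤ => (z : ℚ)) (hB i hi.1 hi.2 j hj.1 hj.2)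
      rw [Finset.sum_congr rfl this, Finset.sum_const, nsmul_eq_mul, hcardk]
    rw [e1]
    have e2 : ∀ i ∈ Finset.Icc (1:ℤ) h, ∑ j ∈ Finset.Icc 1 k,
        (phi n (top (tile i j)) - phi n (bottom (tile i j)) + ((bottom (tile i j)).1 : ℚ)) =
        ∑ j ∈ Finset.Icc 1 k,
        (phi n (right (tile i j)) - phi n (left (tile i j)) + ((left (tile i j)).1 : ℚ)) := by
      intro i hi
      rw [Finset.mem_Icc] at hi
      refine Finset.sum_congr rfl fun j hj => ?_
      rw [Finset.mem_Icc] at hj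
      exact tile_key' hn (htile i j hi.1 hi.2 hj.1 hj.2)
    rw [Finset.sum_congr rfl e2]
    have e3 : ∑ i ∈ Finset.Icc (1:ℤ) h, ∑ j ∈ Finset.Icc 1 k,
        (phi n (right (tile i j)) - phi n (left (tile i j)) + ((left (tile i j)).1 : ℚ)) =
        (∑ j ∈ Finset.Icc (1:ℤ) k, ∑ i ∈ Finset.Icc 1 h,
          (phi n (right (tile i j)) - phi n (left (tile i j)))) +
        ∑ i ∈ Finset.Icc (1:ℤ) h, ∑ j ∈ Finset.Icc 1 k, ((left (tile i j)).1 : ℚ) := by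
      rw [← Finset.sum_comm (s := Finset.Icc (1:ℤ) h)]
      rw [← Finset.sum_add_distrib]
      refine Finset.sum_congr rfl fun i _ => ?_
      rw [← Finset.sum_add_distrib]
    rw [e3]
    have e4 : ∑ j ∈ Finset.Icc (1:ℤ) k, ∑ i ∈ Finset.Icc 1 h,
        (phi n (right (tile i j)) - phi n (left (tile i j))) = 0 := by
      have : ∀ j ∈ Finset.Icc (1:ℤ) k, ∑ i ∈ Finset.Icc 1 h,
          (phi n (right (tile i j)) - phi n (left (tile i j))) =
          phi n (right (tile h j)) - phi n (left (tile 1 j)) := by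
        intro j hj
        rw [Finset.mem_Icc] at hj
        exact hH j hj.1 hj.2 h hh le_rfl
      rw [Finset.sum_congr rfl this, Finset.sum_sub_distrib, hcyl']
      ring
    rw [e4, zero_add]
    have e5 : ∀ i ∈ Finset.Icc (1:ℤ) h, ∑ j ∈ Finset.Icc 1 k, ((left (tile i j)).1 : ℚ) =
        ∑ j ∈ Finset.Icc 1 k, ((left (tile 1 j)).1 : ℚ) := by
      intro i hi
      rw [Finset.mem_Icc] at hi
      refine Finset.sum_congr rfl fun j hj => ?_
      rw [Finset.mem_Icc] at hj
      exact_mod_cast congrArg (fun z : ℤ => (z : ℚ)) (hL j hj.1 hj.2 i hi.1 hi.2)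
    rw [Finset.sum_congr rfl e5, Finset.sum_const, nsmul_eq_mul, hcardh]
  -- conclude
  refine ⟨∑ j ∈ Finset.Icc 1 k, (left (tile 1 j)).1, ?_⟩
  simp only [dotQ_smul, dotQ_sum, dotQ_phi, dotQ_e]
  push_cast
  have expand : 1 / (h:ℚ) * ∑ i ∈ Finset.Icc 1 h, phi n (top (tile i k)) -
      1 / (h:ℚ) * ∑ i ∈ Finset.Icc 1 h, phi n (bottom (tile i 1)) +
      (k:ℚ) * (1 / (h:ℚ) * ∑ i ∈ Finset.Icc 1 h, ((bottom (tile i 1)).1 : ℚ)) =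
      1 / (h:ℚ) * (∑ i ∈ Finset.Icc 1 h, phi n (top (tile i k)) -
        ∑ i ∈ Finset.Icc 1 h, phi n (bottom (tile i 1)) +
        (k:ℚ) * ∑ i ∈ Finset.Icc 1 h, ((bottom (tile i 1)).1 : ℚ)) := by ring
  rw [expand, key1]
  field_simp

end MetallicMean
end

section
/- For every integer n ≥ 1, the metallic mean Wang tile set equals the image of the square under the tile map: 𝒯_n = {TILE_n(x,y) : (x,y) ∈ [0,1]²}. -/
open scoped BigOperators

namespace MetallicMean

/-- White tiles. -/
def whiteT (n : ℤ) : Set Tile :=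
  {τ | ∃ i j : ℤ, 1 ≤ i ∧ i ≤ n ∧ 1 ≤ j ∧ j ≤ n ∧
    τ = ((1, 1, i + 1), (1, 1, j + 1), (1, 1, i), (1, 1, j))}

/-- Horizontal blue tiles (0 ≤ i ≤ n - 1). -/
def blueHT (n : ℤ) : Set Tile :=
  {τ | ∃ i : ℤ, 0 ≤ i ∧ i ≤ n - 1 ∧
    τ = ((0, 0, i + 1), (1, 1, 1), (0, 0, i), (1, 1, n))}

/-- Horizontal yellow tiles. -/
def yellowH (n : ℤ) : Set Tile :=
  {τ | ∃ i : ℤ, 1 ≤ i ∧ i ≤ n ∧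
    τ = ((0, 1, i + 1), (1, 1, 2), (0, 1, i), (1, 1, n + 1))}

/-- Horizontal green tiles. -/
def greenH (n : ℤ) : Set Tile :=
  {τ | ∃ i : ℤ, 0 ≤ i ∧ i ≤ n ∧
    τ = ((0, 1, i + 1), (1, 1, 1), (0, 0, i), (1, 1, n + 1))}

/-- The three vectors indexing junction tiles. -/
def junctionVecs (n : ℤ) : Set Vec3 := {(0, 0, n), (0, 1, n), (0, 1, n + 1)}

/-- The 7 junction tiles (excluding the two pairs ((0,0,n),(0,1,n+1)) and
((0,1,n+1),(0,0,n))). -/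
def junctionT (n : ℤ) : Set Tile :=
  {τ | ∃ u v : Vec3, u ∈ junctionVecs n ∧ v ∈ junctionVecs n ∧
    ¬(u = (0, 0, n) ∧ v = (0, 1, n + 1)) ∧ ¬(u = (0, 1, n + 1) ∧ v = (0, 0, n)) ∧
    τ = ((0, v.2.2 - n, v.2.1), (0, u.2.2 - n, u.2.1), u, v)}

/-- The metallic mean Wang tile set 𝒯_n, given by its explicit description. -/
def TsetExplicit (n : ℤ) : Set Tile :=
  whiteT n ∪ blueHT n ∪ yellowH n ∪ greenH n ∪
    reflect '' blueHT n ∪ reflect '' yellowH n ∪ reflect '' greenH n ∪ junctionT n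

end MetallicMean

namespace MetallicMean

lemma beta_sq (n : ℤ) : beta n ^ 2 = (n : ℝ) * beta n + 1 := by
  have h : Real.sqrt ((n:ℝ)^2 + 4) ^ 2 = (n:ℝ)^2 + 4 :=
    Real.sq_sqrt (by positivity)
  unfold beta
  nlinarith [h]

lemma beta_gt (n : ℤ) (hn : 1 ≤ n) : (n:ℝ) < beta n := by
  have hn0 : (0:ℝ) ≤ (n:ℝ) := by exact_mod_cast (by omega : (0:ℤ) ≤ n)
  have h : (n:ℝ) < Real.sqrt ((n:ℝ)^2 + 4) :=
    (Real.lt_sqrt (by positivity)).mpr (by norm_num)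
  unfold beta; linarith

lemma beta_mul (n : ℤ) : beta n * (beta n - n) = 1 := by
  linear_combination beta_sq n

lemma gamma_pos (n : ℤ) (hn : 1 ≤ n) : 0 < beta n - n :=
  by linarith [beta_gt n hn]

lemma beta_gt_one (n : ℤ) (hn : 1 ≤ n) : 1 < beta n := by
  have := beta_gt n hn
  have hn1 : (1:ℝ) ≤ (n:ℝ) := by exact_mod_cast hn
  linarith

lemma gamma_lt_one (n : ℤ) (hn : 1 ≤ n) : beta n - n < 1 := by
  nlinarith [beta_mul n, beta_gt_one n hn, beta_gt n hn,
    (by exact_mod_cast hn : (1:ℝ) ≤ (n:ℝ))]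

private lemma floor_eq_of {a : ℤ} {r : ℝ} (h1 : (a:ℝ) ≤ r) (h2 : r < a + 1) : ⌊r⌋ = a :=
  Int.floor_eq_iff.mpr ⟨h1, h2⟩

lemma betaStar_eq (n : ℤ) : betaStar n = -(beta n - n) := by
  unfold betaStar; ring

lemma beta_inv (n : ℤ) (hn : 1 ≤ n) : (beta n)⁻¹ = beta n - n :=
  inv_eq_of_mul_eq_one_right (beta_mul n)

lemma lam_eq (n : ℤ) (hn : 1 ≤ n) (x y : ℝ) (a1 a2 a3 : ℤ)
    (h1 : (a1:ℝ) ≤ y - (beta n - n) + 1) (h1' : y - (beta n - n) + 1 < a1 + 1)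
    (h2 : (a2:ℝ) ≤ (beta n - n) * x + y - (beta n - n) + 1)
    (h2' : (beta n - n) * x + y - (beta n - n) + 1 < a2 + 1)
    (h3 : (a3:ℝ) ≤ beta n * x + y - (beta n - n) + 1)
    (h3' : beta n * x + y - (beta n - n) + 1 < a3 + 1) :
    Lam n x y = (a1, a2, a3) := by
  unfold Lam
  rw [beta_inv n hn, betaStar_eq n]
  refine Prod.ext ?_ (Prod.ext ?_ ?_) <;> simp only
  · exact floor_eq_of (by linarith) (by push_cast; linarith)
  · exact floor_eq_of (by linarith) (by push_cast; linarith)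
  · exact floor_eq_of (by linarith) (by push_cast; linarith)

lemma fract_self' (x : ℝ) (h0 : 0 ≤ x) (h1 : x < 1) : Int.fract x = x :=
  Int.fract_eq_self.mpr ⟨h0, h1⟩

lemma fract_hi (n : ℤ) (hn : 1 ≤ n) (x : ℝ) (h0 : beta n - n ≤ x) (h1 : x < 1) :
    Int.fract (x + betaStar n) = x - (beta n - n) := by
  rw [betaStar_eq n]
  have := gamma_pos n hn
  exact Int.fract_eq_self.mpr ⟨by linarith, by linarith⟩

lemma fract_lo (n : ℤ) (hn : 1 ≤ n) (x : ℝ) (h0 : 0 ≤ x) (h1 : x < beta n - n) :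
    Int.fract (x + betaStar n) = x - (beta n - n) + 1 := by
  have h : x + betaStar n = (x - (beta n - n) + 1) + ((-1 : ℤ) : ℝ) := by
    rw [betaStar_eq n]; push_cast; ring
  rw [h, Int.fract_add_intCast]
  have := gamma_lt_one n hn
  exact Int.fract_eq_self.mpr ⟨by linarith, by linarith⟩

lemma tileAt_fract (n : ℤ) (x y : ℝ) :
    TileAt n x y = TileAt n (Int.fract x) (Int.fract y) := by
  unfold TileAt
  rw [Int.fract_fract, Int.fract_fract]
  have hx : Int.fract (Int.fract x + betaStar n) = Int.fract (x + betaStar n) := by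
    conv_rhs => rw [show x = Int.fract x + (⌊x⌋ : ℝ) by rw [Int.fract]; ring]
    rw [add_right_comm, Int.fract_add_intCast]
  have hy : Int.fract (Int.fract y + betaStar n) = Int.fract (y + betaStar n) := by
    conv_rhs => rw [show y = Int.fract y + (⌊y⌋ : ℝ) by rw [Int.fract]; ring]
    rw [add_right_comm, Int.fract_add_intCast]
  rw [hx, hy]

lemma tile_reflect (n : ℤ) (x y : ℝ) : TileAt n x y = reflect (TileAt n y x) := rfl

section Tiles

variable {n : ℤ} {x y : ℝ}

lemma tile_white (hn : 1 ≤ n) (i j : ℤ)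
    (hx0 : beta n - n ≤ x) (hx1 : x < 1) (hy0 : beta n - n ≤ y) (hy1 : y < 1)
    (hi0 : (i:ℝ) ≤ beta n * x + y - (beta n - n))
    (hi1 : beta n * x + y - (beta n - n) < i + 1)
    (hj0 : (j:ℝ) ≤ beta n * y + x - (beta n - n))
    (hj1 : beta n * y + x - (beta n - n) < j + 1) :
    TileAt n x y = ((1,1,i+1),(1,1,j+1),(1,1,i),(1,1,j)) := by
  have hbg := beta_mul n
  have hg0 := gamma_pos n hn
  have hg1 := gamma_lt_one n hn
  have hb1 := beta_gt_one n hn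
  have hgg : (beta n - n) * (beta n - n) < beta n - n := by
    have := mul_lt_mul_of_pos_left hg1 hg0; linarith
  have hg2 : 0 < (beta n - n) * (beta n - n) := mul_pos hg0 hg0
  have hgx0 : 0 ≤ (beta n - n) * x := mul_nonneg hg0.le (by linarith)
  have hgy0 : 0 ≤ (beta n - n) * y := mul_nonneg hg0.le (by linarith)
  have hgx1 : (beta n - n) * x < beta n - n := by
    have := mul_lt_mul_of_pos_left hx1 hg0; linarith
  have hgy1 : (beta n - n) * y < beta n - n := by
    have := mul_lt_mul_of_pos_left hy1 hg0; linarith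
  have hgxg : 0 ≤ (beta n - n) * (x - (beta n - n)) := mul_nonneg hg0.le (by linarith)
  have hgyg : 0 ≤ (beta n - n) * (y - (beta n - n)) := mul_nonneg hg0.le (by linarith)
  have hfx : Int.fract x = x := fract_self' x (by linarith) hx1
  have hfy : Int.fract y = y := fract_self' y (by linarith) hy1
  have hfx' := fract_hi n hn x hx0 hx1
  have hfy' := fract_hi n hn y hy0 hy1
  have L1 : Lam n x y = (1, 1, i+1) := by
    refine lam_eq n hn x y 1 1 (i+1) ?_ ?_ ?_ ?_ ?_ ?_
    · push_cast; linarith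
    · push_cast; linarith
    · push_cast; linarith
    · push_cast; linarith
    · push_cast; linarith
    · push_cast; linarith
  have L2 : Lam n y x = (1, 1, j+1) := by
    refine lam_eq n hn y x 1 1 (j+1) ?_ ?_ ?_ ?_ ?_ ?_
    · push_cast; linarith
    · push_cast; linarith
    · push_cast; linarith
    · push_cast; linarith
    · push_cast; linarith
    · push_cast; linarith
  have L3 : Lam n (x - (beta n - n)) y = (1, 1, i) := by
    refine lam_eq n hn _ y 1 1 i ?_ ?_ ?_ ?_ ?_ ?_
    · push_cast; linarith
    · push_cast; linarith
    · push_cast; linarith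
    · push_cast; linarith
    · push_cast; linarith
    · push_cast; linarith
  have L4 : Lam n (y - (beta n - n)) x = (1, 1, j) := by
    refine lam_eq n hn _ x 1 1 j ?_ ?_ ?_ ?_ ?_ ?_
    · push_cast; linarith
    · push_cast; linarith
    · push_cast; linarith
    · push_cast; linarith
    · push_cast; linarith
    · push_cast; linarith
  unfold TileAt
  rw [hfx, hfy, hfx', hfy', L1, L2, L3, L4]


lemma tile_blue (hn : 1 ≤ n) (i : ℤ)
    (hx0 : beta n - n ≤ x) (hx1 : x < 1) (hy0 : 0 ≤ y) (hy1 : y < beta n - n)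
    (hi0 : (i:ℝ) ≤ beta n * x + y - (beta n - n))
    (hi1 : beta n * x + y - (beta n - n) < i + 1)
    (hc : x + beta n * y < 1) :
    TileAt n x y = ((0,0,i+1),(1,1,1),(0,0,i),(1,1,n)) := by
  have hbg := beta_mul n
  have hg0 := gamma_pos n hn
  have hg1 := gamma_lt_one n hn
  have hb1 := beta_gt_one n hn
  have hgg : (beta n - n) * (beta n - n) < beta n - n := by
    have := mul_lt_mul_of_pos_left hg1 hg0; linarith
  have hg2 : 0 < (beta n - n) * (beta n - n) := mul_pos hg0 hg0
  have hgx0 : 0 ≤ (beta n - n) * x := mul_nonneg hg0.le (by linarith)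
  have hgy0 : 0 ≤ (beta n - n) * y := mul_nonneg hg0.le hy0
  have hgy1 : (beta n - n) * y < (beta n - n) * (beta n - n) :=
    mul_lt_mul_of_pos_left hy1 hg0
  have hgxg : 0 ≤ (beta n - n) * (x - (beta n - n)) := mul_nonneg hg0.le (by linarith)
  have e1 : (beta n - n) * (beta n * y) = y := by
    rw [← mul_assoc, mul_comm (beta n - n) (beta n), hbg, one_mul]
  have hgxy : (beta n - n) * x + y < beta n - n := by
    have h := mul_lt_mul_of_pos_left hc hg0
    rw [mul_add, e1, mul_one] at h; linarith
  have hby0 : 0 ≤ beta n * y := mul_nonneg (by linarith) hy0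
  have hfx : Int.fract x = x := fract_self' x (by linarith) hx1
  have hfy : Int.fract y = y := fract_self' y hy0 (by linarith)
  have hfx' := fract_hi n hn x hx0 hx1
  have hfy' := fract_lo n hn y hy0 hy1
  have L1 : Lam n x y = (0, 0, i+1) := by
    refine lam_eq n hn x y 0 0 (i+1) ?_ ?_ ?_ ?_ ?_ ?_ <;> push_cast <;> linarith
  have L2 : Lam n y x = (1, 1, 1) := by
    refine lam_eq n hn y x 1 1 1 ?_ ?_ ?_ ?_ ?_ ?_ <;> push_cast <;> linarith
  have L3 : Lam n (x - (beta n - n)) y = (0, 0, i) := by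
    refine lam_eq n hn _ y 0 0 i ?_ ?_ ?_ ?_ ?_ ?_ <;> push_cast <;> linarith
  have L4 : Lam n (y - (beta n - n) + 1) x = (1, 1, n) := by
    refine lam_eq n hn _ x 1 1 n ?_ ?_ ?_ ?_ ?_ ?_ <;> push_cast <;> linarith
  unfold TileAt
  rw [hfx, hfy, hfx', hfy', L1, L2, L3, L4]

lemma tile_green (hn : 1 ≤ n) (i : ℤ)
    (hx0 : beta n - n ≤ x) (hx1 : x < 1) (hy0 : 0 ≤ y) (hy1 : y < beta n - n)
    (hi0 : (i:ℝ) ≤ beta n * x + y - (beta n - n))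
    (hi1 : beta n * x + y - (beta n - n) < i + 1)
    (hc1 : 1 ≤ x + beta n * y) (hc2 : x + beta n * y < 1 + (beta n - n)) :
    TileAt n x y = ((0,1,i+1),(1,1,1),(0,0,i),(1,1,n+1)) := by
  have hbg := beta_mul n
  have hg0 := gamma_pos n hn
  have hg1 := gamma_lt_one n hn
  have hb1 := beta_gt_one n hn
  have hgg : (beta n - n) * (beta n - n) < beta n - n := by
    have := mul_lt_mul_of_pos_left hg1 hg0; linarith
  have hg2 : 0 < (beta n - n) * (beta n - n) := mul_pos hg0 hg0
  have hgx0 : 0 ≤ (beta n - n) * x := mul_nonneg hg0.le (by linarith)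
  have hgy0 : 0 ≤ (beta n - n) * y := mul_nonneg hg0.le hy0
  have hgy1 : (beta n - n) * y < (beta n - n) * (beta n - n) :=
    mul_lt_mul_of_pos_left hy1 hg0
  have hgx1 : (beta n - n) * x < beta n - n := by
    have := mul_lt_mul_of_pos_left hx1 hg0; linarith
  have hgxg : 0 ≤ (beta n - n) * (x - (beta n - n)) := mul_nonneg hg0.le (by linarith)
  have e1 : (beta n - n) * (beta n * y) = y := by
    rw [← mul_assoc, mul_comm (beta n - n) (beta n), hbg, one_mul]
  have hgxy1 : beta n - n ≤ (beta n - n) * x + y := by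
    have h := mul_le_mul_of_nonneg_left hc1 hg0.le
    rw [mul_add, e1, mul_one] at h; linarith
  have hgxy2 : (beta n - n) * x + y < (beta n - n) + (beta n - n) * (beta n - n) := by
    have h := mul_lt_mul_of_pos_left hc2 hg0
    rw [mul_add, e1] at h; nlinarith
  have hby0 : 0 ≤ beta n * y := mul_nonneg (by linarith) hy0
  have hby1 : beta n * y < 1 := by
    have := mul_lt_mul_of_pos_left hy1 (show (0:ℝ) < beta n by linarith); linarith
  have hfx : Int.fract x = x := fract_self' x (by linarith) hx1
  have hfy : Int.fract y = y := fract_self' y hy0 (by linarith)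
  have hfx' := fract_hi n hn x hx0 hx1
  have hfy' := fract_lo n hn y hy0 hy1
  have L1 : Lam n x y = (0, 1, i+1) := by
    refine lam_eq n hn x y 0 1 (i+1) ?_ ?_ ?_ ?_ ?_ ?_ <;> push_cast <;> linarith
  have L2 : Lam n y x = (1, 1, 1) := by
    refine lam_eq n hn y x 1 1 1 ?_ ?_ ?_ ?_ ?_ ?_ <;> push_cast <;> linarith
  have L3 : Lam n (x - (beta n - n)) y = (0, 0, i) := by
    refine lam_eq n hn _ y 0 0 i ?_ ?_ ?_ ?_ ?_ ?_ <;> push_cast <;> linarith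
  have L4 : Lam n (y - (beta n - n) + 1) x = (1, 1, n+1) := by
    refine lam_eq n hn _ x 1 1 (n+1) ?_ ?_ ?_ ?_ ?_ ?_ <;> push_cast <;> linarith
  unfold TileAt
  rw [hfx, hfy, hfx', hfy', L1, L2, L3, L4]

lemma tile_yellow (hn : 1 ≤ n) (i : ℤ)
    (hx0 : beta n - n ≤ x) (hx1 : x < 1) (hy0 : 0 ≤ y) (hy1 : y < beta n - n)
    (hi0 : (i:ℝ) ≤ beta n * x + y - (beta n - n))
    (hi1 : beta n * x + y - (beta n - n) < i + 1)
    (hc1 : 1 + (beta n - n) ≤ x + beta n * y) :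
    TileAt n x y = ((0,1,i+1),(1,1,2),(0,1,i),(1,1,n+1)) := by
  have hbg := beta_mul n
  have hg0 := gamma_pos n hn
  have hg1 := gamma_lt_one n hn
  have hb1 := beta_gt_one n hn
  have hgg : (beta n - n) * (beta n - n) < beta n - n := by
    have := mul_lt_mul_of_pos_left hg1 hg0; linarith
  have hg2 : 0 < (beta n - n) * (beta n - n) := mul_pos hg0 hg0
  have hgx0 : 0 ≤ (beta n - n) * x := mul_nonneg hg0.le (by linarith)
  have hgy0 : 0 ≤ (beta n - n) * y := mul_nonneg hg0.le hy0
  have hgy1 : (beta n - n) * y < (beta n - n) * (beta n - n) :=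
    mul_lt_mul_of_pos_left hy1 hg0
  have hgx1 : (beta n - n) * x < beta n - n := by
    have := mul_lt_mul_of_pos_left hx1 hg0; linarith
  have hgxg : 0 ≤ (beta n - n) * (x - (beta n - n)) := mul_nonneg hg0.le (by linarith)
  have e1 : (beta n - n) * (beta n * y) = y := by
    rw [← mul_assoc, mul_comm (beta n - n) (beta n), hbg, one_mul]
  have hgxy1 : (beta n - n) + (beta n - n) * (beta n - n) ≤ (beta n - n) * x + y := by
    have h := mul_le_mul_of_nonneg_left hc1 hg0.le
    linarith [h, e1]
  have hby0 : 0 ≤ beta n * y := mul_nonneg (by linarith) hy0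
  have hby1 : beta n * y < 1 := by
    have := mul_lt_mul_of_pos_left hy1 (show (0:ℝ) < beta n by linarith); linarith
  have hfx : Int.fract x = x := fract_self' x (by linarith) hx1
  have hfy : Int.fract y = y := fract_self' y hy0 (by linarith)
  have hfx' := fract_hi n hn x hx0 hx1
  have hfy' := fract_lo n hn y hy0 hy1
  have L1 : Lam n x y = (0, 1, i+1) := by
    refine lam_eq n hn x y 0 1 (i+1) ?_ ?_ ?_ ?_ ?_ ?_ <;> push_cast <;> linarith
  have L2 : Lam n y x = (1, 1, 2) := by
    refine lam_eq n hn y x 1 1 2 ?_ ?_ ?_ ?_ ?_ ?_ <;> push_cast <;> linarith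
  have L3 : Lam n (x - (beta n - n)) y = (0, 1, i) := by
    refine lam_eq n hn _ y 0 1 i ?_ ?_ ?_ ?_ ?_ ?_ <;> push_cast <;> linarith
  have L4 : Lam n (y - (beta n - n) + 1) x = (1, 1, n+1) := by
    refine lam_eq n hn _ x 1 1 (n+1) ?_ ?_ ?_ ?_ ?_ ?_ <;> push_cast <;> linarith
  unfold TileAt
  rw [hfx, hfy, hfx', hfy', L1, L2, L3, L4]


lemma tile_junction (hn : 1 ≤ n) (p q r s : ℤ)
    (hx0 : 0 ≤ x) (hx1 : x < beta n - n) (hy0 : 0 ≤ y) (hy1 : y < beta n - n)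
    (hp0 : 0 ≤ p) (hp1 : p ≤ 1)
    (hpl : (beta n - n) * (p:ℝ) ≤ x + beta n * y)
    (hpu : x + beta n * y < (beta n - n) + (p:ℝ))
    (hq0 : 0 ≤ q) (hq1 : q ≤ 1)
    (hql : (q:ℝ) ≤ beta n * x + y) (hqu : beta n * x + y < (q:ℝ) + 1)
    (hr0 : 0 ≤ r) (hr1 : r ≤ 1)
    (hrl : (beta n - n) * (r:ℝ) ≤ beta n * x + y)
    (hru : beta n * x + y < (beta n - n) + (r:ℝ))
    (hs0 : 0 ≤ s) (hs1 : s ≤ 1)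
    (hsl : (s:ℝ) ≤ x + beta n * y) (hsu : x + beta n * y < (s:ℝ) + 1) :
    TileAt n x y = ((0,s,r),(0,q,p),(0,p,n+q),(0,r,n+s)) := by
  have hbg := beta_mul n
  have hg0 := gamma_pos n hn
  have hg1 := gamma_lt_one n hn
  have hb1 := beta_gt_one n hn
  have hpR : (p:ℝ) ≤ 1 := by exact_mod_cast hp1
  have hpR0 : (0:ℝ) ≤ (p:ℝ) := by exact_mod_cast hp0
  have hqR : (q:ℝ) ≤ 1 := by exact_mod_cast hq1
  have hqR0 : (0:ℝ) ≤ (q:ℝ) := by exact_mod_cast hq0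
  have hrR : (r:ℝ) ≤ 1 := by exact_mod_cast hr1
  have hrR0 : (0:ℝ) ≤ (r:ℝ) := by exact_mod_cast hr0
  have hsR : (s:ℝ) ≤ 1 := by exact_mod_cast hs1
  have hsR0 : (0:ℝ) ≤ (s:ℝ) := by exact_mod_cast hs0
  have e1 : (beta n - n) * (beta n * y) = y := by
    rw [← mul_assoc, mul_comm (beta n - n) (beta n), hbg, one_mul]
  have e2 : (beta n - n) * (beta n * x) = x := by
    rw [← mul_assoc, mul_comm (beta n - n) (beta n), hbg, one_mul]
  -- scaled versions
  have hpl' : (beta n - n) * ((beta n - n) * (p:ℝ)) ≤ (beta n - n) * x + y := by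
    have h := mul_le_mul_of_nonneg_left hpl hg0.le
    linarith [h, e1]
  have hpu' : (beta n - n) * x + y < (beta n - n) * ((beta n - n) + (p:ℝ)) := by
    have h := mul_lt_mul_of_pos_left hpu hg0
    linarith [h, e1]
  have hsl' : (beta n - n) * (s:ℝ) ≤ (beta n - n) * x + y := by
    have h := mul_le_mul_of_nonneg_left hsl hg0.le
    linarith [h, e1]
  have hsu' : (beta n - n) * x + y < (beta n - n) * ((s:ℝ) + 1) := by
    have h := mul_lt_mul_of_pos_left hsu hg0
    linarith [h, e1]
  have hql' : (beta n - n) * (q:ℝ) ≤ (beta n - n) * y + x := by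
    have h := mul_le_mul_of_nonneg_left hql hg0.le
    linarith [h, e2]
  have hqu' : (beta n - n) * y + x < (beta n - n) * ((q:ℝ) + 1) := by
    have h := mul_lt_mul_of_pos_left hqu hg0
    linarith [h, e2]
  have hrl' : (beta n - n) * ((beta n - n) * (r:ℝ)) ≤ (beta n - n) * y + x := by
    have h := mul_le_mul_of_nonneg_left hrl hg0.le
    linarith [h, e2]
  have hru' : (beta n - n) * y + x < (beta n - n) * ((beta n - n) + (r:ℝ)) := by
    have h := mul_lt_mul_of_pos_left hru hg0
    linarith [h, e2]
  -- auxiliary product bounds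
  have h1p : 0 ≤ (1 - (p:ℝ)) * (1 - (beta n - n)) := mul_nonneg (by linarith) (by linarith)
  have h1q : 0 ≤ (1 - (q:ℝ)) * (1 - (beta n - n)) := mul_nonneg (by linarith) (by linarith)
  have h1r : 0 ≤ (1 - (r:ℝ)) * (1 - (beta n - n)) := mul_nonneg (by linarith) (by linarith)
  have h1s : 0 ≤ (1 - (s:ℝ)) * (1 - (beta n - n)) := mul_nonneg (by linarith) (by linarith)
  have hgg : (beta n - n) * (beta n - n) < beta n - n := by
    have := mul_lt_mul_of_pos_left hg1 hg0; linarith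
  have h2p : 0 ≤ (1 - (p:ℝ)) * (1 - (beta n - n) * (beta n - n)) :=
    mul_nonneg (by linarith) (by linarith)
  have h2r : 0 ≤ (1 - (r:ℝ)) * (1 - (beta n - n) * (beta n - n)) :=
    mul_nonneg (by linarith) (by linarith)
  have hgp : (beta n - n) * (p:ℝ) ≤ (p:ℝ) := by
    have := mul_nonneg hpR0 (show (0:ℝ) ≤ 1 - (beta n - n) by linarith); linarith
  have hgq : (beta n - n) * (q:ℝ) ≤ (q:ℝ) := by
    have := mul_nonneg hqR0 (show (0:ℝ) ≤ 1 - (beta n - n) by linarith); linarith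
  have hgr : (beta n - n) * (r:ℝ) ≤ (r:ℝ) := by
    have := mul_nonneg hrR0 (show (0:ℝ) ≤ 1 - (beta n - n) by linarith); linarith
  have hgs : (beta n - n) * (s:ℝ) ≤ (s:ℝ) := by
    have := mul_nonneg hsR0 (show (0:ℝ) ≤ 1 - (beta n - n) by linarith); linarith
  have hfx : Int.fract x = x := fract_self' x hx0 (by linarith)
  have hfy : Int.fract y = y := fract_self' y hy0 (by linarith)
  have hfx' := fract_lo n hn x hx0 hx1
  have hfy' := fract_lo n hn y hy0 hy1
  have L1 : Lam n x y = (0, s, r) := by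
    refine lam_eq n hn x y 0 s r ?_ ?_ ?_ ?_ ?_ ?_
    · push_cast; linarith
    · push_cast; linarith
    · push_cast; linarith [hsl', h1s]
    · push_cast; linarith [hsu', hgs]
    · push_cast; linarith [hrl, h1r]
    · push_cast; linarith [hru]
  have L2 : Lam n y x = (0, q, p) := by
    refine lam_eq n hn y x 0 q p ?_ ?_ ?_ ?_ ?_ ?_
    · push_cast; linarith
    · push_cast; linarith
    · push_cast; linarith [hql', h1q]
    · push_cast; linarith [hqu', hgq]
    · push_cast; linarith [hpl, h1p]
    · push_cast; linarith [hpu]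
  have L3 : Lam n (x - (beta n - n) + 1) y = (0, p, n + q) := by
    refine lam_eq n hn _ y 0 p (n + q) ?_ ?_ ?_ ?_ ?_ ?_
    · push_cast; linarith
    · push_cast; linarith
    · push_cast; linarith [hpl', h2p]
    · push_cast; linarith [hpu', hgp]
    · push_cast; linarith [hql, hbg]
    · push_cast; linarith [hqu, hbg]
  have L4 : Lam n (y - (beta n - n) + 1) x = (0, r, n + s) := by
    refine lam_eq n hn _ x 0 r (n + s) ?_ ?_ ?_ ?_ ?_ ?_
    · push_cast; linarith
    · push_cast; linarith
    · push_cast; linarith [hrl', h2r]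
    · push_cast; linarith [hru', hgr]
    · push_cast; linarith [hsl, hbg]
    · push_cast; linarith [hsu, hbg]
  unfold TileAt
  rw [hfx, hfy, hfx', hfy', L1, L2, L3, L4]


lemma mem_white (hn : 1 ≤ n)
    (hx0 : beta n - n ≤ x) (hx1 : x < 1) (hy0 : beta n - n ≤ y) (hy1 : y < 1) :
    TileAt n x y ∈ whiteT n := by
  have hbg := beta_mul n
  have hg0 := gamma_pos n hn
  have hg1 := gamma_lt_one n hn
  have hb1 := beta_gt_one n hn
  have hb0 : (0:ℝ) < beta n := by linarith
  have hbx1 : 1 ≤ beta n * x := by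
    have := mul_le_mul_of_nonneg_left hx0 hb0.le; linarith [hbg]
  have hby1 : 1 ≤ beta n * y := by
    have := mul_le_mul_of_nonneg_left hy0 hb0.le; linarith [hbg]
  have hbxb : beta n * x < beta n := by
    have := mul_lt_mul_of_pos_left hx1 hb0; linarith
  have hbyb : beta n * y < beta n := by
    have := mul_lt_mul_of_pos_left hy1 hb0; linarith
  have hi0 : ((⌊beta n * x + y - (beta n - n)⌋ : ℤ) : ℝ) ≤ beta n * x + y - (beta n - n) :=
    Int.floor_le _
  have hi1 := Int.lt_floor_add_one (beta n * x + y - (beta n - n))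
  have hj0 : ((⌊beta n * y + x - (beta n - n)⌋ : ℤ) : ℝ) ≤ beta n * y + x - (beta n - n) :=
    Int.floor_le _
  have hj1 := Int.lt_floor_add_one (beta n * y + x - (beta n - n))
  refine ⟨⌊beta n * x + y - (beta n - n)⌋, ⌊beta n * y + x - (beta n - n)⌋,
    ?_, ?_, ?_, ?_, tile_white hn _ _ hx0 hx1 hy0 hy1 hi0 hi1 hj0 hj1⟩
  · exact Int.le_floor.mpr (by push_cast; linarith)
  · have : ⌊beta n * x + y - (beta n - n)⌋ < n + 1 :=
      Int.floor_lt.mpr (by push_cast; linarith)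
    omega
  · exact Int.le_floor.mpr (by push_cast; linarith)
  · have : ⌊beta n * y + x - (beta n - n)⌋ < n + 1 :=
      Int.floor_lt.mpr (by push_cast; linarith)
    omega

lemma mem_horiz (hn : 1 ≤ n)
    (hx0 : beta n - n ≤ x) (hx1 : x < 1) (hy0 : 0 ≤ y) (hy1 : y < beta n - n) :
    TileAt n x y ∈ blueHT n ∨ TileAt n x y ∈ yellowH n ∨ TileAt n x y ∈ greenH n := by
  have hbg := beta_mul n
  have hg0 := gamma_pos n hn
  have hg1 := gamma_lt_one n hn
  have hb1 := beta_gt_one n hn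
  have hb0 : (0:ℝ) < beta n := by linarith
  have hn0 : (0:ℝ) < (n:ℝ) := by exact_mod_cast (by omega : (0:ℤ) < n)
  have e1 : (beta n - n) * (beta n * y) = y := by
    rw [← mul_assoc, mul_comm (beta n - n) (beta n), hbg, one_mul]
  have e3 : beta n * (beta n * (beta n - n)) = beta n := by rw [hbg, mul_one]
  have hbx1 : 1 ≤ beta n * x := by
    have := mul_le_mul_of_nonneg_left hx0 hb0.le; linarith [hbg]
  have hbxb : beta n * x < beta n := by
    have := mul_lt_mul_of_pos_left hx1 hb0; linarith
  have hby1 : beta n * y < 1 := by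
    have := mul_lt_mul_of_pos_left hy1 hb0; linarith [hbg]
  have hi0 : ((⌊beta n * x + y - (beta n - n)⌋ : ℤ) : ℝ) ≤ beta n * x + y - (beta n - n) :=
    Int.floor_le _
  have hi1 := Int.lt_floor_add_one (beta n * x + y - (beta n - n))
  by_cases hc : x + beta n * y < 1
  · left
    refine ⟨⌊beta n * x + y - (beta n - n)⌋, ?_, ?_,
      tile_blue hn _ hx0 hx1 hy0 hy1 hi0 hi1 hc⟩
    · exact Int.le_floor.mpr (by push_cast; linarith)
    · have hgxy : (beta n - n) * x + y < beta n - n := by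
        have h := mul_lt_mul_of_pos_left hc hg0; linarith [h, e1]
      have hnx : (n:ℝ) * x < n := by
        have := mul_lt_mul_of_pos_left hx1 hn0; linarith
      have : ⌊beta n * x + y - (beta n - n)⌋ < n :=
        Int.floor_lt.mpr (by push_cast; linarith [hgxy, hnx])
      omega
  · by_cases hc2 : x + beta n * y < 1 + (beta n - n)
    · right; right
      refine ⟨⌊beta n * x + y - (beta n - n)⌋, ?_, ?_,
        tile_green hn _ hx0 hx1 hy0 hy1 hi0 hi1 (by linarith) hc2⟩
      · exact Int.le_floor.mpr (by push_cast; linarith)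
      · have : ⌊beta n * x + y - (beta n - n)⌋ < n + 1 :=
          Int.floor_lt.mpr (by push_cast; linarith)
        omega
    · right; left
      have hcy : 1 + (beta n - n) ≤ x + beta n * y := by linarith
      refine ⟨⌊beta n * x + y - (beta n - n)⌋, ?_, ?_,
        tile_yellow hn _ hx0 hx1 hy0 hy1 hi0 hi1 hcy⟩
      · have h := mul_le_mul_of_nonneg_left hcy hb0.le
        have h2 : 0 ≤ (beta n * beta n - 1) * ((beta n - n) - y) :=
          mul_nonneg (by nlinarith [hb1]) (by linarith)
        exact Int.le_floor.mpr (by push_cast; linarith [h, h2, hbg, e3])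
      · have : ⌊beta n * x + y - (beta n - n)⌋ < n + 1 :=
          Int.floor_lt.mpr (by push_cast; linarith)
        omega

lemma mem_junction (hn : 1 ≤ n)
    (hx0 : 0 ≤ x) (hx1 : x < beta n - n) (hy0 : 0 ≤ y) (hy1 : y < beta n - n) :
    TileAt n x y ∈ junctionT n := by
  have hbg := beta_mul n
  have hg0 := gamma_pos n hn
  have hg1 := gamma_lt_one n hn
  have hb1 := beta_gt_one n hn
  have hb0 : (0:ℝ) < beta n := by linarith
  have hn0 : (0:ℝ) ≤ (n:ℝ) := by exact_mod_cast (by omega : (0:ℤ) ≤ n)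
  have e1 : (beta n - n) * (beta n * y) = y := by
    rw [← mul_assoc, mul_comm (beta n - n) (beta n), hbg, one_mul]
  have e2 : (beta n - n) * (beta n * x) = x := by
    rw [← mul_assoc, mul_comm (beta n - n) (beta n), hbg, one_mul]
  have hby1 : beta n * y < 1 := by
    have := mul_lt_mul_of_pos_left hy1 hb0; linarith [hbg]
  have hbx1 : beta n * x < 1 := by
    have := mul_lt_mul_of_pos_left hx1 hb0; linarith [hbg]
  have hby0 : 0 ≤ beta n * y := mul_nonneg hb0.le hy0
  have hbx0 : 0 ≤ beta n * x := mul_nonneg hb0.le hx0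
  have himp1 : (1:ℝ) ≤ beta n * x + y → (beta n - n) ≤ x + beta n * y := by
    intro h
    have h' := mul_le_mul_of_nonneg_left h hg0.le
    have hny : 0 ≤ (n:ℝ) * y := mul_nonneg hn0 hy0
    linarith [h', e2, hny]
  have himp2 : (1:ℝ) ≤ x + beta n * y → (beta n - n) ≤ beta n * x + y := by
    intro h
    have h' := mul_le_mul_of_nonneg_left h hg0.le
    have hnx : 0 ≤ (n:ℝ) * x := mul_nonneg hn0 hx0
    linarith [h', e1, hnx]
  by_cases hS : (1:ℝ) ≤ x + beta n * y
  · by_cases hQ : (1:ℝ) ≤ beta n * x + y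
    · -- (C,C)
      have E := tile_junction (x := x) (y := y) hn 1 1 1 1 hx0 hx1 hy0 hy1
        (by norm_num) (by norm_num) (by push_cast; linarith) (by push_cast; linarith)
        (by norm_num) (by norm_num) (by push_cast; linarith) (by push_cast; linarith)
        (by norm_num) (by norm_num) (by push_cast; linarith) (by push_cast; linarith)
        (by norm_num) (by norm_num) (by push_cast; linarith) (by push_cast; linarith)
      refine ⟨(0,1,n+1), (0,1,n+1), by simp [junctionVecs], by simp [junctionVecs],
        by simp, by simp, ?_⟩
      rw [E]; simp only [Prod.mk.injEq, true_and, and_true]; omega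
    · -- s = 1 forces r = 1
      have hR := himp2 hS
      -- (B,C) : p=1 q=0 r=1 s=1, u=(0,1,n), v=(0,1,n+1)
      have E := tile_junction (x := x) (y := y) hn 1 0 1 1 hx0 hx1 hy0 hy1
        (by norm_num) (by norm_num) (by push_cast; linarith) (by push_cast; linarith)
        (by norm_num) (by norm_num) (by push_cast; linarith) (by push_cast; linarith)
        (by norm_num) (by norm_num) (by push_cast; linarith) (by push_cast; linarith)
        (by norm_num) (by norm_num) (by push_cast; linarith) (by push_cast; linarith)
      refine ⟨(0,1,n), (0,1,n+1), by simp [junctionVecs], by simp [junctionVecs],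
        by simp, by simp, ?_⟩
      rw [E]; simp only [Prod.mk.injEq, true_and, and_true]; omega
  · by_cases hP : (beta n - n) ≤ x + beta n * y
    · by_cases hQ : (1:ℝ) ≤ beta n * x + y
      · -- (C,B) : p=1 q=1 r=1 s=0
        have E := tile_junction (x := x) (y := y) hn 1 1 1 0 hx0 hx1 hy0 hy1
          (by norm_num) (by norm_num) (by push_cast; linarith) (by push_cast; linarith)
          (by norm_num) (by norm_num) (by push_cast; linarith) (by push_cast; linarith)
          (by norm_num) (by norm_num) (by push_cast; linarith) (by push_cast; linarith)
          (by norm_num) (by norm_num) (by push_cast; linarith) (by push_cast; linarith)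
        refine ⟨(0,1,n+1), (0,1,n), by simp [junctionVecs], by simp [junctionVecs],
          by simp, by simp, ?_⟩
        rw [E]; simp only [Prod.mk.injEq, true_and, and_true]; omega
      · by_cases hR : (beta n - n) ≤ beta n * x + y
        · -- (B,B) : p=1 q=0 r=1 s=0
          have E := tile_junction (x := x) (y := y) hn 1 0 1 0 hx0 hx1 hy0 hy1
            (by norm_num) (by norm_num) (by push_cast; linarith) (by push_cast; linarith)
            (by norm_num) (by norm_num) (by push_cast; linarith) (by push_cast; linarith)
            (by norm_num) (by norm_num) (by push_cast; linarith) (by push_cast; linarith)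
            (by norm_num) (by norm_num) (by push_cast; linarith) (by push_cast; linarith)
          refine ⟨(0,1,n), (0,1,n), by simp [junctionVecs], by simp [junctionVecs],
            by simp, by simp, ?_⟩
          rw [E]; simp only [Prod.mk.injEq, true_and, and_true]; omega
        · -- (B,A) : p=1 q=0 r=0 s=0
          have E := tile_junction (x := x) (y := y) hn 1 0 0 0 hx0 hx1 hy0 hy1
            (by norm_num) (by norm_num) (by push_cast; linarith) (by push_cast; linarith)
            (by norm_num) (by norm_num) (by push_cast; linarith) (by push_cast; linarith)
            (by norm_num) (by norm_num) (by push_cast; linarith) (by push_cast; linarith)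
            (by norm_num) (by norm_num) (by push_cast; linarith) (by push_cast; linarith)
          refine ⟨(0,1,n), (0,0,n), by simp [junctionVecs], by simp [junctionVecs],
            by simp, by simp, ?_⟩
          rw [E]; simp only [Prod.mk.injEq, true_and, and_true]; omega
    · by_cases hQ : (1:ℝ) ≤ beta n * x + y
      · exact absurd (himp1 hQ) hP
      · by_cases hR : (beta n - n) ≤ beta n * x + y
        · -- (A,B) : p=0 q=0 r=1 s=0
          have E := tile_junction (x := x) (y := y) hn 0 0 1 0 hx0 hx1 hy0 hy1
            (by norm_num) (by norm_num) (by push_cast; linarith) (by push_cast; linarith)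
            (by norm_num) (by norm_num) (by push_cast; linarith) (by push_cast; linarith)
            (by norm_num) (by norm_num) (by push_cast; linarith) (by push_cast; linarith)
            (by norm_num) (by norm_num) (by push_cast; linarith) (by push_cast; linarith)
          refine ⟨(0,0,n), (0,1,n), by simp [junctionVecs], by simp [junctionVecs],
            by simp, by simp, ?_⟩
          rw [E]; simp only [Prod.mk.injEq, true_and, and_true]; omega
        · -- (A,A) : all 0
          have E := tile_junction (x := x) (y := y) hn 0 0 0 0 hx0 hx1 hy0 hy1
            (by norm_num) (by norm_num) (by push_cast; linarith) (by push_cast; linarith)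
            (by norm_num) (by norm_num) (by push_cast; linarith) (by push_cast; linarith)
            (by norm_num) (by norm_num) (by push_cast; linarith) (by push_cast; linarith)
            (by norm_num) (by norm_num) (by push_cast; linarith) (by push_cast; linarith)
          refine ⟨(0,0,n), (0,0,n), by simp [junctionVecs], by simp [junctionVecs],
            by simp, by simp, ?_⟩
          rw [E]; simp only [Prod.mk.injEq, true_and, and_true]; omega


lemma exists_blue (hn : 1 ≤ n) (i : ℤ) (h0 : 0 ≤ i) (h1 : i ≤ n - 1) :
    ∃ x y : ℝ, x ∈ Set.Icc (0:ℝ) 1 ∧ y ∈ Set.Icc (0:ℝ) 1 ∧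
      TileAt n x y = ((0,0,i+1),(1,1,1),(0,0,i),(1,1,(n:ℤ))) := by
  have hbg := beta_mul n
  have hg0 := gamma_pos n hn
  have hg1 := gamma_lt_one n hn
  have hb1 := beta_gt_one n hn
  have hb0 : (0:ℝ) < beta n := by linarith
  have hiR : (0:ℝ) ≤ (i:ℝ) := by exact_mod_cast h0
  have hiN : (i:ℝ) ≤ (n:ℝ) - 1 := by
    have : ((i:ℤ):ℝ) ≤ ((n - 1 : ℤ):ℝ) := by exact_mod_cast h1
    push_cast at this; linarith
  have hbn : (n:ℝ) < beta n := beta_gt n hn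
  have hbx : beta n * (((i:ℝ)+1)/beta n) = (i:ℝ)+1 := by field_simp
  have hx0 : beta n - n ≤ ((i:ℝ)+1)/beta n := by
    rw [le_div_iff₀ hb0]; nlinarith [hbg]
  have hx1 : ((i:ℝ)+1)/beta n < 1 := by
    rw [div_lt_one hb0]; linarith
  refine ⟨((i:ℝ)+1)/beta n, 0, ⟨by linarith, by linarith⟩, ⟨le_refl _, by norm_num⟩, ?_⟩
  refine tile_blue hn i hx0 hx1 (le_refl _) hg0 ?_ ?_ ?_
  · rw [hbx]; push_cast; linarith
  · rw [hbx]; push_cast; linarith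
  · rw [mul_zero]; linarith

set_option maxHeartbeats 1000000 in
lemma exists_white (hn : 1 ≤ n) (i j : ℤ)
    (hi1 : 1 ≤ i) (hin : i ≤ n) (hj1 : 1 ≤ j) (hjn : j ≤ n) :
    ∃ x y : ℝ, x ∈ Set.Icc (0:ℝ) 1 ∧ y ∈ Set.Icc (0:ℝ) 1 ∧
      TileAt n x y = ((1,1,i+1),(1,1,j+1),(1,1,i),(1,1,j)) := by
  have hbg := beta_mul n
  have hg0 := gamma_pos n hn
  have hg1 := gamma_lt_one n hn
  have hb1 := beta_gt_one n hn
  have hb0 : (0:ℝ) < beta n := by linarith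
  have hn0 : (0:ℝ) < (n:ℝ) := by exact_mod_cast (by omega : (0:ℤ) < n)
  have h2n2 : (0:ℝ) < 2*(n:ℝ)^2 := by positivity
  have hiR : (1:ℝ) ≤ (i:ℝ) := by exact_mod_cast hi1
  have hiN : (i:ℝ) ≤ (n:ℝ) := by exact_mod_cast hin
  have hjR : (1:ℝ) ≤ (j:ℝ) := by exact_mod_cast hj1
  have hjN : (j:ℝ) ≤ (n:ℝ) := by exact_mod_cast hjn
  have hbn : (n:ℝ) < beta n := beta_gt n hn
  have hbg2 : 2*(n:ℝ)^2*(beta n*(beta n - n)) = 2*(n:ℝ)^2 := by rw [hbg]; ring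
  set PN := 2*(n:ℝ)*beta n*((i:ℝ)-1) + beta n*(2*(j:ℝ)-1) - 2*(n:ℝ)*((j:ℝ)-1) - (2*(i:ℝ)-1)
    with hPNd
  set QN := 2*(n:ℝ)*beta n*((j:ℝ)-1) + beta n*(2*(i:ℝ)-1) - 2*(n:ℝ)*((i:ℝ)-1) - (2*(j:ℝ)-1)
    with hQNd
  set X := (beta n - n) + (beta n - n)*PN/(2*(n:ℝ)^2) with hXd
  set Y := (beta n - n) + (beta n - n)*QN/(2*(n:ℝ)^2) with hYd
  have ePi : 0 ≤ ((i:ℝ)-1) * (2*(n:ℝ)*beta n - 2) :=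
    mul_nonneg (by linarith) (by nlinarith)
  have ePj : 0 ≤ ((j:ℝ)-1) * (2*beta n - 2*(n:ℝ)) :=
    mul_nonneg (by linarith) (by linarith)
  have eQj : 0 ≤ ((j:ℝ)-1) * (2*(n:ℝ)*beta n - 2) :=
    mul_nonneg (by linarith) (by nlinarith)
  have eQi : 0 ≤ ((i:ℝ)-1) * (2*beta n - 2*(n:ℝ)) :=
    mul_nonneg (by linarith) (by linarith)
  have ePi' : 0 ≤ ((n:ℝ)-(i:ℝ)) * (2*(n:ℝ)*beta n - 2) :=
    mul_nonneg (by linarith) (by nlinarith)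
  have ePj' : 0 ≤ ((n:ℝ)-(j:ℝ)) * (2*beta n - 2*(n:ℝ)) :=
    mul_nonneg (by linarith) (by linarith)
  have eQj' : 0 ≤ ((n:ℝ)-(j:ℝ)) * (2*(n:ℝ)*beta n - 2) :=
    mul_nonneg (by linarith) (by nlinarith)
  have eQi' : 0 ≤ ((n:ℝ)-(i:ℝ)) * (2*beta n - 2*(n:ℝ)) :=
    mul_nonneg (by linarith) (by linarith)
  have hPN0 : 0 ≤ PN := by rw [hPNd]; linarith [ePi, ePj]
  have hQN0 : 0 ≤ QN := by rw [hQNd]; linarith [eQj, eQi]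
  have hPN2 : PN < 2*(n:ℝ)^2*(beta n - 1) := by rw [hPNd]; linarith [ePi', ePj']
  have hQN2 : QN < 2*(n:ℝ)^2*(beta n - 1) := by rw [hQNd]; linarith [eQj', eQi']
  have hX0 : beta n - n ≤ X := by
    rw [hXd]
    have : 0 ≤ (beta n - n)*PN/(2*(n:ℝ)^2) :=
      div_nonneg (mul_nonneg hg0.le hPN0) (by positivity)
    linarith
  have hY0 : beta n - n ≤ Y := by
    rw [hYd]
    have : 0 ≤ (beta n - n)*QN/(2*(n:ℝ)^2) :=
      div_nonneg (mul_nonneg hg0.le hQN0) (by positivity)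
    linarith
  have hX1 : X < 1 := by
    rw [hXd]
    have h := mul_lt_mul_of_pos_left hPN2 hg0
    have h2 : (beta n - n)*PN/(2*(n:ℝ)^2) < 1 - (beta n - n) := by
      rw [div_lt_iff₀ h2n2]; linarith [h, hbg2]
    linarith
  have hY1 : Y < 1 := by
    rw [hYd]
    have h := mul_lt_mul_of_pos_left hQN2 hg0
    have h2 : (beta n - n)*QN/(2*(n:ℝ)^2) < 1 - (beta n - n) := by
      rw [div_lt_iff₀ h2n2]; linarith [h, hbg2]
    linarith
  have cX : (2*(n:ℝ)^2) * X = 2*(n:ℝ)^2*(beta n - n) + (beta n - n)*PN := by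
    rw [hXd]; field_simp
  have cY : (2*(n:ℝ)^2) * Y = 2*(n:ℝ)^2*(beta n - n) + (beta n - n)*QN := by
    rw [hYd]; field_simp
  have key1 : 2*(n:ℝ)^2 * (beta n * X + Y - (beta n - n))
      = 2*(n:ℝ)^2*(i:ℝ) + (n:ℝ)*(2*(j:ℝ)-1) := by
    have h : 2*(n:ℝ)^2 * (beta n * X + Y - (beta n - n))
        = beta n * (2*(n:ℝ)^2 * X) + (2*(n:ℝ)^2 * Y) - 2*(n:ℝ)^2*(beta n - n) := by ring
    rw [h, cX, cY, hPNd, hQNd]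
    linear_combination (2*(n:ℝ)^2 + beta n*(2*(n:ℝ)*((i:ℝ)-1)+2*(j:ℝ)-1)) * hbg
  have key2 : 2*(n:ℝ)^2 * (beta n * Y + X - (beta n - n))
      = 2*(n:ℝ)^2*(j:ℝ) + (n:ℝ)*(2*(i:ℝ)-1) := by
    have h : 2*(n:ℝ)^2 * (beta n * Y + X - (beta n - n))
        = beta n * (2*(n:ℝ)^2 * Y) + (2*(n:ℝ)^2 * X) - 2*(n:ℝ)^2*(beta n - n) := by ring
    rw [h, cX, cY, hPNd, hQNd]
    linear_combination (2*(n:ℝ)^2 + beta n*(2*(n:ℝ)*((j:ℝ)-1)+2*(i:ℝ)-1)) * hbg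
  have hi0 : (i:ℝ) ≤ beta n * X + Y - (beta n - n) := by
    have := mul_nonneg hn0.le (show (0:ℝ) ≤ 2*(j:ℝ)-1 by linarith)
    exact (mul_le_mul_iff_right₀ h2n2).mp (by rw [key1]; linarith)
  have hi1' : beta n * X + Y - (beta n - n) < (i:ℝ) + 1 := by
    have := mul_lt_mul_of_pos_left (show 2*(j:ℝ)-1 < 2*(n:ℝ) by linarith) hn0
    refine (mul_lt_mul_iff_right₀ h2n2).mp ?_
    rw [key1]; linarith [this]
  have hj0 : (j:ℝ) ≤ beta n * Y + X - (beta n - n) := by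
    have := mul_nonneg hn0.le (show (0:ℝ) ≤ 2*(i:ℝ)-1 by linarith)
    exact (mul_le_mul_iff_right₀ h2n2).mp (by rw [key2]; linarith)
  have hj1' : beta n * Y + X - (beta n - n) < (j:ℝ) + 1 := by
    have := mul_lt_mul_of_pos_left (show 2*(i:ℝ)-1 < 2*(n:ℝ) by linarith) hn0
    refine (mul_lt_mul_iff_right₀ h2n2).mp ?_
    rw [key2]; linarith [this]
  exact ⟨X, Y, ⟨by linarith, by linarith⟩, ⟨by linarith, by linarith⟩,
    tile_white hn i j hX0 hX1 hY0 hY1 hi0 hi1' hj0 hj1'⟩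


lemma exists_green (hn : 1 ≤ n) (i : ℤ) (h0 : 0 ≤ i) (h1 : i ≤ n) :
    ∃ x y : ℝ, x ∈ Set.Icc (0:ℝ) 1 ∧ y ∈ Set.Icc (0:ℝ) 1 ∧
      TileAt n x y = ((0,1,i+1),(1,1,1),(0,0,i),(1,1,n+1)) := by
  have hbg := beta_mul n
  have hg0 := gamma_pos n hn
  have hg1 := gamma_lt_one n hn
  have hb1 := beta_gt_one n hn
  have hb0 : (0:ℝ) < beta n := by linarith
  have hn0 : (0:ℝ) < (n:ℝ) := by exact_mod_cast (by omega : (0:ℤ) < n)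
  have hn1R : (1:ℝ) ≤ (n:ℝ) := by exact_mod_cast hn
  have hgg : (beta n - n) * (beta n - n) < beta n - n := by
    have := mul_lt_mul_of_pos_left hg1 hg0; linarith
  have hg2pos : 0 < (beta n - n)*(beta n - n) := mul_pos hg0 hg0
  have hg3pos : 0 < (beta n - n)*(beta n - n)*(beta n - n) := mul_pos hg2pos hg0
  have e4 : beta n * ((beta n - n)*(beta n - n)) = beta n - n := by
    rw [← mul_assoc, hbg, one_mul]
  have e5 : beta n * ((beta n - n)*(beta n - n)*(beta n - n)) = (beta n - n)*(beta n - n) := by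
    linear_combination ((beta n - n)*(beta n - n)) * hbg
  have hng : (n:ℝ)*(beta n - n) = 1 - (beta n - n)*(beta n - n) := by
    linear_combination hbg
  have hg3lt : (beta n - n)*(beta n - n)*(beta n - n) < (beta n - n)*(beta n - n) := by
    have := mul_lt_mul_of_pos_left hg1 hg2pos; linarith
  rcases eq_or_lt_of_le h0 with h00 | h0'
  · -- i = 0
    subst h00
    refine ⟨beta n - n, (beta n - n) - (beta n - n)*(beta n - n)/2,
      ⟨by linarith, by linarith⟩, ⟨by linarith, by linarith⟩, ?_⟩
    refine tile_green hn 0 (le_refl _) (by linarith) (by linarith) (by linarith)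
      ?_ ?_ ?_ ?_
    · push_cast; linarith [hbg]
    · push_cast; linarith [hbg]
    · linarith [hbg, e4]
    · linarith [hbg, e4]
  · rcases eq_or_lt_of_le h1 with hnn | h1'
    · -- i = n
      have hiR : (i:ℝ) = (n:ℝ) := by exact_mod_cast hnn
      have hgn : beta n - n ≤ (n:ℝ)*(beta n - n) :=
        le_mul_of_one_le_left hg0.le hn1R
      have hx0g : beta n - n ≤ 1 - (beta n - n)*(beta n - n)*(beta n - n)/2 := by
        linarith [hng, hgn, hg3lt]
      refine ⟨1 - (beta n - n)*(beta n - n)*(beta n - n)/2, (beta n - n)*(beta n - n),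
        ⟨by linarith, by linarith⟩, ⟨by linarith, by linarith⟩, ?_⟩
      refine tile_green hn i hx0g (by linarith) (by linarith) hgg ?_ ?_ ?_ ?_
      · rw [hiR]; linarith [e5]
      · push_cast; rw [hiR]; linarith [e5, hgg, hg1]
      · linarith [e4, hg3lt, hgg]
      · linarith [e4, hg3pos]
    · -- 1 ≤ i ≤ n - 1
      have hiR : (1:ℝ) ≤ (i:ℝ) := by exact_mod_cast h0'
      have hiN : (i:ℝ) ≤ (n:ℝ) - 1 := by
        have : ((i:ℤ):ℝ) ≤ ((n-1 : ℤ):ℝ) := by exact_mod_cast (by omega : i ≤ n - 1)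
        push_cast at this; linarith
      have h2n : (0:ℝ) < 2*(n:ℝ) := by linarith
      set x := (2*(i:ℝ)+1)/(2*(n:ℝ)) with hxd
      have hnx : (n:ℝ)*x = (i:ℝ) + 1/2 := by rw [hxd]; field_simp
      have hx0 : beta n - n ≤ x := by
        rw [hxd, le_div_iff₀ h2n]
        nlinarith [hng, hg2pos]
      have hx1 : x < 1 := by
        rw [hxd, div_lt_one h2n]; linarith
      set y := (beta n - n)*(1 + (beta n - n)/2 - x) with hyd
      have hy0 : 0 ≤ y := by
        rw [hyd]; exact mul_nonneg hg0.le (by linarith)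
      have hy1 : y < beta n - n := by
        have h := mul_lt_mul_of_pos_left
          (show 1 + (beta n - n)/2 - x < 1 by linarith) hg0
        rw [hyd]; linarith
      have hby : beta n * y = 1 + (beta n - n)/2 - x := by
        rw [hyd, ← mul_assoc, hbg, one_mul]
      refine ⟨x, y, ⟨by linarith, by linarith⟩, ⟨by linarith, by linarith⟩, ?_⟩
      refine tile_green hn i hx0 hx1 hy0 hy1 ?_ ?_ ?_ ?_
      · rw [hyd]; push_cast
        nlinarith [hnx, hg2pos]
      · rw [hyd]; push_cast
        nlinarith [hnx, hgg, hg1]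
      · rw [hby]; linarith
      · rw [hby]; linarith

lemma exists_yellow (hn : 1 ≤ n) (i : ℤ) (h0 : 1 ≤ i) (h1 : i ≤ n) :
    ∃ x y : ℝ, x ∈ Set.Icc (0:ℝ) 1 ∧ y ∈ Set.Icc (0:ℝ) 1 ∧
      TileAt n x y = ((0,1,i+1),(1,1,2),(0,1,i),(1,1,n+1)) := by
  have hbg := beta_mul n
  have hg0 := gamma_pos n hn
  have hg1 := gamma_lt_one n hn
  have hb1 := beta_gt_one n hn
  have hb0 : (0:ℝ) < beta n := by linarith
  have hgg : (beta n - n) * (beta n - n) < beta n - n := by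
    have := mul_lt_mul_of_pos_left hg1 hg0; linarith
  have hg2pos : 0 < (beta n - n)*(beta n - n) := mul_pos hg0 hg0
  have hg3pos : 0 < (beta n - n)*(beta n - n)*(beta n - n) := mul_pos hg2pos hg0
  have e4 : beta n * ((beta n - n)*(beta n - n)) = beta n - n := by
    rw [← mul_assoc, hbg, one_mul]
  have e5 : beta n * ((beta n - n)*(beta n - n)*(beta n - n)) = (beta n - n)*(beta n - n) := by
    linear_combination ((beta n - n)*(beta n - n)) * hbg
  have hg3lt : (beta n - n)*(beta n - n)*(beta n - n) < (beta n - n)*(beta n - n) := by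
    have := mul_lt_mul_of_pos_left hg1 hg2pos; linarith
  have hpp : 0 ≤ (1 - (beta n - n)) * (1 - (beta n - n)*(beta n - n)) :=
    mul_nonneg (by linarith) (by linarith)
  rcases eq_or_lt_of_le h0 with h00 | h0'
  · -- i = 1
    have h00' : i = 1 := h00.symm
    subst h00'
    have hq := mul_pos (show (0:ℝ) < 1 - (beta n - n) by linarith)
      (show (0:ℝ) < 2 - (beta n - n) by linarith)
    have hgposm : 0 ≤ (beta n - n)*(1-(beta n - n)) :=
      mul_nonneg hg0.le (by linarith)
    have hg2m : 0 < (beta n - n)*(beta n - n)*(1-(beta n - n)) :=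
      mul_pos hg2pos (by linarith)
    have hx0 : beta n - n ≤ (beta n - n) + (beta n - n)*(1-(beta n - n))/2 := by
      linarith
    have hx1 : (beta n - n) + (beta n - n)*(1-(beta n - n))/2 < 1 := by linarith
    have hy0 : (0:ℝ) ≤ (beta n - n) - (beta n - n)*(beta n - n)*(1-(beta n - n))/2 := by
      linarith [hgg, hg3pos]
    have hy1 : (beta n - n) - (beta n - n)*(beta n - n)*(1-(beta n - n))/2 < beta n - n := by
      linarith
    refine ⟨(beta n - n) + (beta n - n)*(1-(beta n - n))/2,
      (beta n - n) - (beta n - n)*(beta n - n)*(1-(beta n - n))/2,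
      ⟨by linarith, by linarith⟩, ⟨by linarith, by linarith⟩, ?_⟩
    refine tile_yellow hn 1 hx0 hx1 hy0 hy1 ?_ ?_ ?_
    · push_cast; linarith [hbg, e4, hpp]
    · push_cast; linarith [hbg, e4, hg1,
        mul_nonneg (show (0:ℝ) ≤ 1 - (beta n - n) by linarith) hg2pos.le]
    · linarith [hbg, e4, e5]
  · -- 2 ≤ i
    have hiR2 : (2:ℝ) ≤ (i:ℝ) := by exact_mod_cast h0'
    have hiN : (i:ℝ) ≤ (n:ℝ) := by exact_mod_cast h1
    have hbn : (n:ℝ) < beta n := beta_gt n hn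
    set x := ((i:ℝ) + ((beta n - n)*(beta n - n) - (beta n - n)*(beta n - n)*(beta n - n)))/beta n with hxd
    set y := (beta n - n) - ((beta n - n)*(beta n - n) - (beta n - n)*(beta n - n)*(beta n - n))/2 with hyd
    clear_value x y
    have hbx : beta n * x = (i:ℝ) + ((beta n - n)*(beta n - n) - (beta n - n)*(beta n - n)*(beta n - n)) := by
      rw [hxd]; field_simp
    have hx0 : beta n - n ≤ x := by
      rw [hxd, le_div_iff₀ hb0]
      linarith [hbg, hg3lt, hiR2]
    have hx1 : x < 1 := by
      rw [hxd, div_lt_one hb0]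
      linarith [hgg, hg3pos, hiN, hbn]
    have hy0 : 0 ≤ y := by rw [hyd]; linarith [hgg, hg3pos, hg0]
    have hy1 : y < beta n - n := by rw [hyd]; linarith [hg3lt]
    have hbyv : beta n * y = 1 - ((beta n - n) - (beta n - n)*(beta n - n))/2 := by
      rw [hyd]; linear_combination hbg - e4/2 + e5/2
    refine ⟨x, y, ⟨by linarith [hg0], by linarith⟩, ⟨by linarith [hg0], by linarith [hg1]⟩, ?_⟩
    refine tile_yellow hn i hx0 hx1 hy0 hy1 ?_ ?_ ?_
    · rw [hbx, hyd]; push_cast; linarith [hg3lt]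
    · rw [hbx, hyd]; push_cast; linarith [hgg, hg1, hg3pos]
    · rw [hbyv]
      have hxlow : (beta n - n) + ((beta n - n) - (beta n - n)*(beta n - n))/2 ≤ x := by
        rw [hxd, le_div_iff₀ hb0]
        linarith [hbg, e4, hiR2, hg3lt, hg1]
      linarith


lemma exists_junction (hn : 1 ≤ n) (u v : Vec3)
    (hu : u ∈ junctionVecs n) (hv : v ∈ junctionVecs n)
    (hex1 : ¬(u = (0, 0, n) ∧ v = (0, 1, n + 1)))
    (hex2 : ¬(u = (0, 1, n + 1) ∧ v = (0, 0, n))) :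
    ∃ x y : ℝ, x ∈ Set.Icc (0:ℝ) 1 ∧ y ∈ Set.Icc (0:ℝ) 1 ∧
      TileAt n x y = ((0, v.2.2 - n, v.2.1), (0, u.2.2 - n, u.2.1), u, v) := by
  have hbg := beta_mul n
  have hg0 := gamma_pos n hn
  have hg1 := gamma_lt_one n hn
  have hb1 := beta_gt_one n hn
  have hb0 : (0:ℝ) < beta n := by linarith
  have hgg : (beta n - n) * (beta n - n) < beta n - n := by
    have := mul_lt_mul_of_pos_left hg1 hg0; linarith
  have hg2pos : 0 < (beta n - n)*(beta n - n) := mul_pos hg0 hg0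
  have hg3pos : 0 < (beta n - n)*(beta n - n)*(beta n - n) := mul_pos hg2pos hg0
  have e4 : beta n * ((beta n - n)*(beta n - n)) = beta n - n := by
    rw [← mul_assoc, hbg, one_mul]
  have e5 : beta n * ((beta n - n)*(beta n - n)*(beta n - n)) = (beta n - n)*(beta n - n) := by
    linear_combination ((beta n - n)*(beta n - n)) * hbg
  have hg3lt : (beta n - n)*(beta n - n)*(beta n - n) < (beta n - n)*(beta n - n) := by
    have := mul_lt_mul_of_pos_left hg1 hg2pos; linarith
  have hpp : 0 ≤ (1 - (beta n - n)) * (1 - (beta n - n)*(beta n - n)) :=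
    mul_nonneg (by linarith) (by linarith)
  simp only [junctionVecs, Set.mem_insert_iff, Set.mem_singleton_iff] at hu hv
  rcases hu with hu' | hu' | hu' <;> rcases hv with hv' | hv' | hv' <;> subst hu' <;> subst hv'
  · -- (A,A)
    refine ⟨(0:ℝ), (0:ℝ), ⟨by linarith, by linarith⟩, ⟨by linarith, by linarith⟩, ?_⟩
    have E := tile_junction (x := (0:ℝ)) (y := (0:ℝ)) hn 0 0 0 0
      (by linarith) (by linarith) (by linarith) (by linarith)
      (by norm_num) (by norm_num) (by push_cast; linarith) (by push_cast; linarith)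
      (by norm_num) (by norm_num) (by push_cast; linarith) (by push_cast; linarith)
      (by norm_num) (by norm_num) (by push_cast; linarith) (by push_cast; linarith)
      (by norm_num) (by norm_num) (by push_cast; linarith) (by push_cast; linarith)
    rw [E]
    simp only [Prod.mk.injEq, true_and, and_true] <;> omega
  · -- (A,B)
    refine ⟨((beta n - n)*(beta n - n)), (0:ℝ), ⟨by linarith, by linarith⟩, ⟨by linarith, by linarith⟩, ?_⟩
    have E := tile_junction (x := ((beta n - n)*(beta n - n))) (y := (0:ℝ)) hn 0 0 1 0
      (by linarith) (by linarith) (by linarith) (by linarith)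
      (by norm_num) (by norm_num) (by push_cast; linarith) (by push_cast; linarith)
      (by norm_num) (by norm_num) (by push_cast; linarith) (by push_cast; linarith)
      (by norm_num) (by norm_num) (by push_cast; linarith) (by push_cast; linarith)
      (by norm_num) (by norm_num) (by push_cast; linarith) (by push_cast; linarith)
    rw [E]
    simp only [Prod.mk.injEq, true_and, and_true] <;> omega
  · -- (A,C) excluded
    exact absurd ⟨rfl, rfl⟩ hex1
  · -- (B,A)
    refine ⟨(0:ℝ), ((beta n - n)*(beta n - n)), ⟨by linarith, by linarith⟩, ⟨by linarith, by linarith⟩, ?_⟩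
    have E := tile_junction (x := (0:ℝ)) (y := ((beta n - n)*(beta n - n))) hn 1 0 0 0
      (by linarith) (by linarith) (by linarith) (by linarith)
      (by norm_num) (by norm_num) (by push_cast; linarith) (by push_cast; linarith)
      (by norm_num) (by norm_num) (by push_cast; linarith) (by push_cast; linarith)
      (by norm_num) (by norm_num) (by push_cast; linarith) (by push_cast; linarith)
      (by norm_num) (by norm_num) (by push_cast; linarith) (by push_cast; linarith)
    rw [E]
    simp only [Prod.mk.injEq, true_and, and_true] <;> omega
  · -- (B,B)
    refine ⟨((beta n - n)/2), ((beta n - n)/2), ⟨by linarith, by linarith⟩, ⟨by linarith, by linarith⟩, ?_⟩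
    have E := tile_junction (x := ((beta n - n)/2)) (y := ((beta n - n)/2)) hn 1 0 1 0
      (by linarith) (by linarith) (by linarith) (by linarith)
      (by norm_num) (by norm_num) (by push_cast; linarith) (by push_cast; linarith)
      (by norm_num) (by norm_num) (by push_cast; linarith) (by push_cast; linarith)
      (by norm_num) (by norm_num) (by push_cast; linarith) (by push_cast; linarith)
      (by norm_num) (by norm_num) (by push_cast; linarith) (by push_cast; linarith)
    rw [E]
    simp only [Prod.mk.injEq, true_and, and_true] <;> omega
  · -- (B,C)
    refine ⟨((beta n - n)*(1-(beta n - n))/2), ((beta n - n) - (beta n - n)*(beta n - n)*(1-(beta n - n))/2), ⟨by linarith, by linarith⟩, ⟨by linarith, by linarith⟩, ?_⟩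
    have E := tile_junction (x := ((beta n - n)*(1-(beta n - n))/2)) (y := ((beta n - n) - (beta n - n)*(beta n - n)*(1-(beta n - n))/2)) hn 1 0 1 1
      (by linarith) (by linarith) (by linarith) (by linarith)
      (by norm_num) (by norm_num) (by push_cast; linarith) (by push_cast; linarith)
      (by norm_num) (by norm_num) (by push_cast; linarith) (by push_cast; linarith)
      (by norm_num) (by norm_num) (by push_cast; linarith) (by push_cast; linarith)
      (by norm_num) (by norm_num) (by push_cast; linarith) (by push_cast; linarith)
    rw [E]
    simp only [Prod.mk.injEq, true_and, and_true] <;> omega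
  · -- (C,A) excluded
    exact absurd ⟨rfl, rfl⟩ hex2
  · -- (C,B)
    refine ⟨((beta n - n) - (beta n - n)*(beta n - n)*(1-(beta n - n))/2), ((beta n - n)*(1-(beta n - n))/2), ⟨by linarith, by linarith⟩, ⟨by linarith, by linarith⟩, ?_⟩
    have E := tile_junction (x := ((beta n - n) - (beta n - n)*(beta n - n)*(1-(beta n - n))/2)) (y := ((beta n - n)*(1-(beta n - n))/2)) hn 1 1 1 0
      (by linarith) (by linarith) (by linarith) (by linarith)
      (by norm_num) (by norm_num) (by push_cast; linarith) (by push_cast; linarith)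
      (by norm_num) (by norm_num) (by push_cast; linarith) (by push_cast; linarith)
      (by norm_num) (by norm_num) (by push_cast; linarith) (by push_cast; linarith)
      (by norm_num) (by norm_num) (by push_cast; linarith) (by push_cast; linarith)
    rw [E]
    simp only [Prod.mk.injEq, true_and, and_true] <;> omega
  · -- (C,C)
    refine ⟨((beta n - n) - (beta n - n)*(beta n - n)*(beta n - n)/2), ((beta n - n) - (beta n - n)*(beta n - n)*(beta n - n)/2), ⟨by linarith, by linarith⟩, ⟨by linarith, by linarith⟩, ?_⟩
    have E := tile_junction (x := ((beta n - n) - (beta n - n)*(beta n - n)*(beta n - n)/2)) (y := ((beta n - n) - (beta n - n)*(beta n - n)*(beta n - n)/2)) hn 1 1 1 1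
      (by linarith) (by linarith) (by linarith) (by linarith)
      (by norm_num) (by norm_num) (by push_cast; linarith) (by push_cast; linarith)
      (by norm_num) (by norm_num) (by push_cast; linarith) (by push_cast; linarith)
      (by norm_num) (by norm_num) (by push_cast; linarith) (by push_cast; linarith)
      (by norm_num) (by norm_num) (by push_cast; linarith) (by push_cast; linarith)
    rw [E]
    simp only [Prod.mk.injEq, true_and, and_true] <;> omega



lemma mem_explicit (hn : 1 ≤ n) (hx0 : 0 ≤ x) (hx1 : x < 1)
    (hy0 : 0 ≤ y) (hy1 : y < 1) : TileAt n x y ∈ TsetExplicit n := by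
  have hg0 := gamma_pos n hn
  have hg1 := gamma_lt_one n hn
  simp only [TsetExplicit, Set.mem_union]
  by_cases hx : beta n - n ≤ x
  · by_cases hy : beta n - n ≤ y
    · exact Or.inl (Or.inl (Or.inl (Or.inl (Or.inl (Or.inl (Or.inl
        (mem_white hn hx hx1 hy hy1)))))))
    · push_neg at hy
      rcases mem_horiz hn hx hx1 hy0 hy with h | h | h
      · exact Or.inl (Or.inl (Or.inl (Or.inl (Or.inl (Or.inl (Or.inr h))))))
      · exact Or.inl (Or.inl (Or.inl (Or.inl (Or.inl (Or.inr h)))))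
      · exact Or.inl (Or.inl (Or.inl (Or.inl (Or.inr h))))
  · push_neg at hx
    by_cases hy : beta n - n ≤ y
    · rcases mem_horiz hn hy hy1 hx0 hx with h | h | h
      · refine Or.inl (Or.inl (Or.inl (Or.inr ?_)))
        exact ⟨TileAt n y x, h, (tile_reflect n x y).symm⟩
      · refine Or.inl (Or.inl (Or.inr ?_))
        exact ⟨TileAt n y x, h, (tile_reflect n x y).symm⟩
      · refine Or.inl (Or.inr ?_)
        exact ⟨TileAt n y x, h, (tile_reflect n x y).symm⟩
    · push_neg at hy
      exact Or.inr (mem_junction hn hx0 hx hy0 hy)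
end Tiles


/-- For every integer n ≥ 1, the metallic mean Wang tile set (given by its
explicit description) equals the image of the unit square under the tile map:
𝒯_n = {TILE_n(x,y) : (x,y) ∈ [0,1]²}. -/
theorem statement10 (n : ℤ) (hn : 1 ≤ n) :
    TsetExplicit n =
      {τ : Tile | ∃ x y : ℝ, x ∈ Set.Icc (0 : ℝ) 1 ∧ y ∈ Set.Icc (0 : ℝ) 1 ∧
        τ = TileAt n x y} := by
  ext τ
  simp only [Set.mem_setOf_eq]
  constructor
  · intro hτ
    simp only [TsetExplicit, Set.mem_union] at hτ
    rcases hτ with (((((((hw | hb) | hy) | hg) | hrb) | hry) | hrg) | hj)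
    · obtain ⟨i, j, h1, h2, h3, h4, hτ⟩ := hw
      obtain ⟨x, y, hx, hy, ht⟩ := exists_white hn i j h1 h2 h3 h4
      exact ⟨x, y, hx, hy, by rw [hτ, ht]⟩
    · obtain ⟨i, h1, h2, hτ⟩ := hb
      obtain ⟨x, y, hx, hy, ht⟩ := exists_blue hn i h1 h2
      exact ⟨x, y, hx, hy, by rw [hτ, ht]⟩
    · obtain ⟨i, h1, h2, hτ⟩ := hy
      obtain ⟨x, y, hx, hy, ht⟩ := exists_yellow hn i h1 h2
      exact ⟨x, y, hx, hy, by rw [hτ, ht]⟩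
    · obtain ⟨i, h1, h2, hτ⟩ := hg
      obtain ⟨x, y, hx, hy, ht⟩ := exists_green hn i h1 h2
      exact ⟨x, y, hx, hy, by rw [hτ, ht]⟩
    · obtain ⟨τ0, ⟨i, h1, h2, hτ0⟩, hre⟩ := hrb
      obtain ⟨x, y, hx, hy, ht⟩ := exists_blue hn i h1 h2
      refine ⟨y, x, hy, hx, ?_⟩
      rw [← hre, hτ0, ← ht]
      exact (tile_reflect n y x).symm
    · obtain ⟨τ0, ⟨i, h1, h2, hτ0⟩, hre⟩ := hry
      obtain ⟨x, y, hx, hy, ht⟩ := exists_yellow hn i h1 h2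
      refine ⟨y, x, hy, hx, ?_⟩
      rw [← hre, hτ0, ← ht]
      exact (tile_reflect n y x).symm
    · obtain ⟨τ0, ⟨i, h1, h2, hτ0⟩, hre⟩ := hrg
      obtain ⟨x, y, hx, hy, ht⟩ := exists_green hn i h1 h2
      refine ⟨y, x, hy, hx, ?_⟩
      rw [← hre, hτ0, ← ht]
      exact (tile_reflect n y x).symm
    · obtain ⟨u, v, hu, hv, hex1, hex2, hτ⟩ := hj
      obtain ⟨x, y, hx, hy, ht⟩ := exists_junction hn u v hu hv hex1 hex2
      exact ⟨x, y, hx, hy, by rw [hτ, ht]⟩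
  · rintro ⟨x, y, ⟨hx0, hx1⟩, ⟨hy0, hy1⟩, rfl⟩
    rw [tileAt_fract]
    exact mem_explicit hn (Int.fract_nonneg x) (Int.fract_lt_one x)
      (Int.fract_nonneg y) (Int.fract_lt_one y)

end MetallicMean
end
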